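/- Suppose c : ℝ^d × ℝ^d → ℝ is translation invariant, c(x, y) = σ(y − x), with |σ(z)| ≤ M exp(−c|z|) for all z. Then for any bounded measurable f on Q₁, with f_λ(x) := f(λ^{−1/d}x), λ^{−1} ∫_{Q_λ × Q_λ} f_λ(x) f_λ(y) c(x, y) dx dy → (∫_{ℝ^d} σ(z) dz)(∫_{Q₁} f²(u) du) as λ → ∞, provided f is a.e. continuous. -/

import Mathlib

open scoped ENNReal
open MeasureTheory

/-- The cube `Q_λ = [-λ^{1/d}/2, λ^{1/d}/2]^d` of volume `λ` in `ℝ^d`. -/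
def cube (d : ℕ) (lam : ℝ) : Set (EuclideanSpace ℝ (Fin d)) :=
  {x | ∀ i, |x i| ≤ lam ^ ((1:ℝ)/d) / 2}

lemma isClosed_cube (d : ℕ) (lam : ℝ) : IsClosed (cube d lam) := by
  have : cube d lam = ⋂ i, ((EuclideanSpace.proj i : EuclideanSpace ℝ (Fin d) →L[ℝ] ℝ) ⁻¹'
      {t : ℝ | |t| ≤ lam ^ ((1:ℝ)/d) / 2}) := by
    ext x; simp [cube, Set.mem_iInter]
  rw [this]
  exact isClosed_iInter fun i => IsClosed.preimage (EuclideanSpace.proj i).continuous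
    (isClosed_le continuous_abs continuous_const)

lemma convex_cube (d : ℕ) (lam : ℝ) : Convex ℝ (cube d lam) := by
  have : cube d lam = ⋂ i, ((EuclideanSpace.proj i : EuclideanSpace ℝ (Fin d) →L[ℝ] ℝ).toLinearMap ⁻¹'
      (Set.Icc (-(lam ^ ((1:ℝ)/d) / 2)) (lam ^ ((1:ℝ)/d) / 2))) := by
    ext x; simp [cube, Set.mem_iInter, abs_le]
  rw [this]
  exact convex_iInter fun i => (convex_Icc _ _).linear_preimage _

lemma measurableSet_cube (d : ℕ) (lam : ℝ) : MeasurableSet (cube d lam) :=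
  (isClosed_cube d lam).measurableSet

lemma cube_subset_ball (d : ℕ) : cube d 1 ⊆ Metric.closedBall (0 : EuclideanSpace ℝ (Fin d)) d := by
  intro x hx
  have hx' : ∀ i, |x i| ≤ 1/2 := by
    intro i; have := hx i; rwa [Real.one_rpow] at this
  rw [Metric.mem_closedBall, dist_zero_right]
  have h1 : ‖x‖ ≤ Real.sqrt (∑ _i : Fin d, (1/2:ℝ)^2) := by
    rw [EuclideanSpace.norm_eq]
    apply Real.sqrt_le_sqrt
    apply Finset.sum_le_sum
    intro i _
    have := hx' i
    have : ‖x i‖ ≤ 1/2 := by rwa [Real.norm_eq_abs]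
    nlinarith [norm_nonneg (x i)]
  refine h1.trans ?_
  rw [Finset.sum_const, Finset.card_univ, Fintype.card_fin, nsmul_eq_mul]
  calc Real.sqrt (d * (1/2:ℝ)^2) ≤ Real.sqrt ((d:ℝ)^2) := by
        apply Real.sqrt_le_sqrt
        rcases Nat.eq_zero_or_pos d with h | h
        · simp [h]
        · have : (1:ℝ) ≤ d := by exact_mod_cast h
          nlinarith
    _ = d := Real.sqrt_sq (Nat.cast_nonneg d)

lemma volume_cube_lt_top (d : ℕ) : volume (cube d 1) < ⊤ :=
  lt_of_le_of_lt (measure_mono (cube_subset_ball d)) (measure_closedBall_lt_top)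

lemma integrable_exp_neg_norm (d : ℕ) {c : ℝ} (hc : 0 < c) :
    Integrable (fun z : EuclideanSpace ℝ (Fin d) => Real.exp (-c * ‖z‖)) := by
  set n : ℕ := d + 1 with hn
  set a : ℝ := c / n with ha
  have ha0 : 0 < a := by positivity
  set K : ℝ := max 1 a⁻¹ with hK
  have hK1 : (1:ℝ) ≤ K := le_max_left _ _
  have hKa : 1 ≤ K * a := by
    rw [← inv_mul_cancel₀ ha0.ne']
    exact mul_le_mul_of_nonneg_right (le_max_right _ _) ha0.le
  have hfin : (Module.finrank ℝ (EuclideanSpace ℝ (Fin d)) : ℝ) < (n : ℝ) := by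
    simp [finrank_euclideanSpace_fin, hn]
  refine ((integrable_one_add_norm (μ := volume) hfin).const_mul (K ^ n)).mono'
    (Measurable.aestronglyMeasurable (by fun_prop)) ?_
  filter_upwards with z
  set t : ℝ := ‖z‖ with ht
  have ht0 : 0 ≤ t := norm_nonneg z
  have h1t : (0:ℝ) < 1 + t := by linarith
  have claim1 : 1 + t ≤ K * Real.exp (a * t) := by
    have h := Real.add_one_le_exp (a * t)
    calc 1 + t ≤ K * (1 + a * t) := by nlinarith
      _ ≤ K * Real.exp (a * t) := by nlinarith [Real.exp_pos (a*t)]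
  have claim2 : (1 + t) ^ n ≤ K ^ n * Real.exp (c * t) := by
    calc (1 + t) ^ n ≤ (K * Real.exp (a * t)) ^ n := by
          exact pow_le_pow_left₀ h1t.le claim1 n
      _ = K ^ n * Real.exp (a * t) ^ n := mul_pow _ _ _
      _ = K ^ n * Real.exp (c * t) := by
          rw [← Real.exp_nat_mul]
          congr 2
          field_simp [ha]
          rw [ha, mul_div_assoc', mul_div_cancel_left₀ c (by positivity : (n:ℝ) ≠ 0), mul_comm]
  rw [Real.norm_eq_abs, abs_of_nonneg (Real.exp_pos _).le]
  have hrw : (1 + t) ^ (-(n:ℝ)) = ((1 + t) ^ n)⁻¹ := by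
    rw [Real.rpow_neg h1t.le, Real.rpow_natCast]
  rw [hrw]
  have h3 : Real.exp (-c * t) = K ^ n * (K ^ n * Real.exp (c * t))⁻¹ := by
    rw [mul_inv, ← mul_assoc, mul_inv_cancel₀ (by positivity : (K:ℝ)^n ≠ 0), one_mul,
      neg_mul, Real.exp_neg]
  calc Real.exp (-c * t) = K ^ n * (K ^ n * Real.exp (c * t))⁻¹ := h3
    _ ≤ K ^ n * ((1 + t) ^ n)⁻¹ := by
        gcongr

lemma mem_cube_smul {d : ℕ} (hd : 1 ≤ d) {lam : ℝ} (hlam : 0 < lam)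
    (u : EuclideanSpace ℝ (Fin d)) :
    (lam ^ ((1:ℝ)/d)) • u ∈ cube d lam ↔ u ∈ cube d 1 := by
  have hr : 0 < lam ^ ((1:ℝ)/d) := Real.rpow_pos_of_pos hlam _
  simp only [cube, Set.mem_setOf_eq, Real.one_rpow]
  constructor
  · intro h i
    have := h i
    rw [PiLp.smul_apply, smul_eq_mul, abs_mul, abs_of_pos hr] at this
    calc |u i| = (lam ^ ((1:ℝ)/d) * |u i|) / lam ^ ((1:ℝ)/d) := by field_simp
      _ ≤ (lam ^ ((1:ℝ)/d) / 2) / lam ^ ((1:ℝ)/d) := by gcongr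
      _ = 1 / 2 := by field_simp
  · intro h i
    rw [PiLp.smul_apply, smul_eq_mul, abs_mul, abs_of_pos hr]
    calc lam ^ ((1:ℝ)/d) * |u i| ≤ lam ^ ((1:ℝ)/d) * (1/2) := by
          exact mul_le_mul_of_nonneg_left (h i) hr.le
      _ = lam ^ ((1:ℝ)/d) / 2 := by ring

lemma key_eq {d : ℕ} (hd : 1 ≤ d) (σ f : EuclideanSpace ℝ (Fin d) → ℝ)
    {lam : ℝ} (hlam : 0 < lam) :
    lam⁻¹ * (∫ x in cube d lam, ∫ y in cube d lam,
        f ((lam ^ (-(1:ℝ)/d)) • x) * f ((lam ^ (-(1:ℝ)/d)) • y) * σ (y - x))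
    = ∫ u, (cube d 1).indicator f u *
        ∫ z, (cube d 1).indicator f (u + (lam ^ ((1:ℝ)/d))⁻¹ • z) * σ z := by
  have hd0 : (d:ℝ) ≠ 0 := by positivity
  set r : ℝ := lam ^ ((1:ℝ)/d) with hrdef
  have hr : 0 < r := Real.rpow_pos_of_pos hlam _
  have hscal : lam ^ (-(1:ℝ)/d) = r⁻¹ := by
    rw [neg_div, Real.rpow_neg hlam.le]
  have hrd : r ^ d = lam := by
    rw [hrdef, ← Real.rpow_natCast (lam ^ ((1:ℝ)/d)) d, ← Real.rpow_mul hlam.le]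
    rw [one_div_mul_cancel hd0, Real.rpow_one]
  set g : EuclideanSpace ℝ (Fin d) → ℝ := (cube d 1).indicator f with hg
  have hmem : ∀ w : EuclideanSpace ℝ (Fin d), w ∈ cube d lam ↔ r⁻¹ • w ∈ cube d 1 := by
    intro w
    constructor
    · intro h
      rw [← mem_cube_smul hd hlam (r⁻¹ • w)]
      rwa [smul_smul, mul_inv_cancel₀ hr.ne', one_smul]
    · intro h
      have := (mem_cube_smul hd hlam (r⁻¹ • w)).2 h
      rwa [smul_smul, mul_inv_cancel₀ hr.ne', one_smul] at this
  -- Step 1: rewrite the inner integral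
  have step1 : ∀ x : EuclideanSpace ℝ (Fin d),
      (∫ y in cube d lam, f (r⁻¹ • x) * f (r⁻¹ • y) * σ (y - x))
      = f (r⁻¹ • x) * ∫ z, g (r⁻¹ • x + r⁻¹ • z) * σ z := by
    intro x
    rw [← integral_indicator (measurableSet_cube d lam)]
    rw [← integral_add_left_eq_self
      (f := (cube d lam).indicator fun y => f (r⁻¹ • x) * f (r⁻¹ • y) * σ (y - x)) x]
    rw [← integral_const_mul]
    congr 1
    funext z
    by_cases hz : x + z ∈ cube d lam
    · rw [Set.indicator_of_mem hz]
      have hz1 : r⁻¹ • x + r⁻¹ • z ∈ cube d 1 := by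
        rw [← smul_add]; exact (hmem _).1 hz
      rw [hg, Set.indicator_of_mem hz1, smul_add, add_sub_cancel_left]
      ring
    · rw [Set.indicator_of_notMem hz]
      have hz1 : r⁻¹ • x + r⁻¹ • z ∉ cube d 1 := by
        rw [← smul_add]; exact fun h => hz ((hmem _).2 h)
      rw [hg, Set.indicator_of_notMem hz1]
      ring
  simp only [hscal]
  conv_lhs => rw [show (∫ x in cube d lam, ∫ y in cube d lam,
      f (r⁻¹ • x) * f (r⁻¹ • y) * σ (y - x))
    = ∫ x in cube d lam, f (r⁻¹ • x) * ∫ z, g (r⁻¹ • x + r⁻¹ • z) * σ z from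
    setIntegral_congr_fun (measurableSet_cube d lam) fun x _ => step1 x]
  -- Step 2: outer change of variables
  set I : EuclideanSpace ℝ (Fin d) → ℝ := fun v => ∫ z, g (v + r⁻¹ • z) * σ z with hI
  set G : EuclideanSpace ℝ (Fin d) → ℝ :=
    (cube d lam).indicator (fun x => f (r⁻¹ • x) * I (r⁻¹ • x)) with hG
  rw [← integral_indicator (measurableSet_cube d lam)]
  have hcomp : (∫ u, G (r • u)) = |((r:ℝ) ^ Module.finrank ℝ (EuclideanSpace ℝ (Fin d)))⁻¹| •
      ∫ x, G x := Measure.integral_comp_smul volume G r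
  rw [finrank_euclideanSpace_fin] at hcomp
  have habs : |((r:ℝ) ^ d)⁻¹| = lam⁻¹ := by
    rw [abs_of_nonneg (by positivity), hrd]
  rw [habs, smul_eq_mul] at hcomp
  have hGr : ∀ u, G (r • u) = g u * I u := by
    intro u
    by_cases hu : u ∈ cube d 1
    · have h1 : r • u ∈ cube d lam := (mem_cube_smul hd hlam u).2 hu
      rw [hG, Set.indicator_of_mem h1, hg, Set.indicator_of_mem hu,
        smul_smul, inv_mul_cancel₀ hr.ne', one_smul]
    · have h1 : r • u ∉ cube d lam := fun h => hu ((mem_cube_smul hd hlam u).1 h)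
      rw [hG, Set.indicator_of_notMem h1, hg, Set.indicator_of_notMem hu, zero_mul]
  calc lam⁻¹ * ∫ x, G x = ∫ u, G (r • u) := hcomp.symm
    _ = ∫ u, g u * I u := by simp only [hGr]

/-- If the two-point correlation `c(x,y) = σ(y-x)` is translation invariant
with exponentially decaying `σ`, then for bounded measurable a.e.-continuous `f` on `Q₁`,
`λ^{-1} ∫_{Q_λ×Q_λ} f_λ(x) f_λ(y) c(x,y) dx dy → (∫ σ)(∫_{Q₁} f²)` as `λ → ∞`. -/
theorem two_point_correlation_scaling_limit {d : ℕ} (hd : 1 ≤ d)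
    (σ : EuclideanSpace ℝ (Fin d) → ℝ) (hσmeas : Measurable σ)
    (M c : ℝ) (hM : 0 < M) (hc : 0 < c)
    (hσdecay : ∀ z, |σ z| ≤ M * Real.exp (-c * ‖z‖))
    (f : EuclideanSpace ℝ (Fin d) → ℝ) (hfmeas : Measurable f)
    (hfbd : ∃ B, ∀ x ∈ cube d 1, |f x| ≤ B)
    (hfcont : ∀ᵐ x ∂(volume.restrict (cube d 1)), ContinuousAt f x) :
    Filter.Tendsto
      (fun lam : ℝ => lam⁻¹ *
        ∫ x in cube d lam, ∫ y in cube d lam,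
          f ((lam ^ (-(1:ℝ)/d)) • x) * f ((lam ^ (-(1:ℝ)/d)) • y) * σ (y - x))
      Filter.atTop
      (nhds ((∫ z, σ z) * ∫ u in cube d 1, f u ^ 2)) := by
  classical
  obtain ⟨B, hB⟩ := hfbd
  have h0mem : (0 : EuclideanSpace ℝ (Fin d)) ∈ cube d 1 := by
    intro i
    simp [Real.one_rpow]
  have hB0 : 0 ≤ B := le_trans (abs_nonneg _) (hB 0 h0mem)
  set g : EuclideanSpace ℝ (Fin d) → ℝ := (cube d 1).indicator f with hg
  have hgB : ∀ w, |g w| ≤ B := by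
    intro w
    by_cases hw : w ∈ cube d 1
    · rw [hg, Set.indicator_of_mem hw]; exact hB w hw
    · rw [hg, Set.indicator_of_notMem hw, abs_zero]; exact hB0
  have hgmeas : Measurable g := hfmeas.indicator (measurableSet_cube d 1)
  have hexp : Integrable (fun z : EuclideanSpace ℝ (Fin d) => Real.exp (-c * ‖z‖)) :=
    integrable_exp_neg_norm d hc
  set Kexp : ℝ := ∫ z : EuclideanSpace ℝ (Fin d), Real.exp (-c * ‖z‖) with hKexp
  set S : ℝ := ∫ z, σ z with hS
  set I : ℝ → EuclideanSpace ℝ (Fin d) → ℝ :=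
    fun lam u => ∫ z, g (u + (lam ^ ((1:ℝ)/d))⁻¹ • z) * σ z with hI
  -- uniform bound on the inner integral
  have hinner_bd : ∀ (s : ℝ) (u : EuclideanSpace ℝ (Fin d)),
      |∫ z, g (u + s • z) * σ z| ≤ B * (M * Kexp) := by
    intro s u
    have hb : ∀ z : EuclideanSpace ℝ (Fin d),
        ‖g (u + s • z) * σ z‖ ≤ B * (M * Real.exp (-c * ‖z‖)) := by
      intro z
      rw [Real.norm_eq_abs, abs_mul]
      have h1 := hgB (u + s • z)
      have h2 := hσdecay z
      have h3 : 0 ≤ |σ z| := abs_nonneg _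
      nlinarith [abs_nonneg (g (u + s • z))]
    have := norm_integral_le_of_norm_le ((hexp.const_mul M).const_mul B) (Filter.Eventually.of_forall hb)
    rw [Real.norm_eq_abs] at this
    refine this.trans ?_
    rw [integral_const_mul, integral_const_mul]
  -- measurability of the inner integral in u
  have hImeas : ∀ s : ℝ, Measurable fun u : EuclideanSpace ℝ (Fin d) =>
      ∫ z, g (u + s • z) * σ z := by
    intro s
    have hsm : StronglyMeasurable fun p : EuclideanSpace ℝ (Fin d) × EuclideanSpace ℝ (Fin d) =>
        g (p.1 + s • p.2) * σ p.2 := by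
      apply Measurable.stronglyMeasurable
      exact ((hgmeas.comp (measurable_fst.add (measurable_snd.const_smul s))).mul
        (hσmeas.comp measurable_snd))
    exact hsm.integral_prod_right'.measurable
  -- the limit function
  have hlim_int : (∫ u, g u * (f u * S)) = S * ∫ u in cube d 1, f u ^ 2 := by
    have : ∀ u, g u * (f u * S) = S * (cube d 1).indicator (fun u => f u ^ 2) u := by
      intro u
      by_cases hu : u ∈ cube d 1
      · rw [hg, Set.indicator_of_mem hu, Set.indicator_of_mem hu]; ring
      · rw [hg, Set.indicator_of_notMem hu, Set.indicator_of_notMem hu]; ring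
    simp only [this]
    rw [integral_const_mul, integral_indicator (measurableSet_cube d 1)]
  -- main dominated convergence
  have H : Filter.Tendsto (fun lam : ℝ => ∫ u, g u * I lam u) Filter.atTop
      (nhds (S * ∫ u in cube d 1, f u ^ 2)) := by
    rw [← hlim_int]
    apply tendsto_integral_filter_of_dominated_convergence
      ((cube d 1).indicator fun _ => B * (B * (M * Kexp)))
    · filter_upwards with lam
      exact (hgmeas.mul (hImeas _)).aestronglyMeasurable
    · filter_upwards with lam
      filter_upwards with u
      by_cases hu : u ∈ cube d 1
      · rw [Set.indicator_of_mem hu, Real.norm_eq_abs, abs_mul]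
        have h1 := hgB u
        have h2 := hinner_bd (lam ^ ((1:ℝ)/d))⁻¹ u
        have h3 : 0 ≤ |I lam u| := abs_nonneg _
        nlinarith [abs_nonneg (g u)]
      · rw [Set.indicator_of_notMem hu, hg, Set.indicator_of_notMem hu, zero_mul,
          norm_zero]
    · rw [integrable_indicator_iff (measurableSet_cube d 1)]
      exact integrableOn_const (volume_cube_lt_top d).ne
    · -- pointwise a.e. convergence
      have h1 : ∀ᵐ u : EuclideanSpace ℝ (Fin d), u ∉ frontier (cube d 1) := by
        have := (convex_cube d 1).addHaar_frontier (volume)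
        exact (MeasureTheory.measure_eq_zero_iff_ae_notMem).mp this
      have h2 : ∀ᵐ u : EuclideanSpace ℝ (Fin d), u ∈ cube d 1 → ContinuousAt f u :=
        (ae_restrict_iff' (measurableSet_cube d 1)).mp hfcont
      filter_upwards [h1, h2] with u hu1 hu2
      by_cases hu : u ∈ cube d 1
      · have hint : u ∈ interior (cube d 1) := by
          rcases (isClosed_cube d 1).closure_eq ▸ hu1 with h
          by_contra hni
          exact hu1 ⟨subset_closure hu, hni⟩
        have hcontu : ContinuousAt f u := hu2 hu
        have hItend : Filter.Tendsto (fun lam => I lam u) Filter.atTop (nhds (f u * S)) := by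
          have : (f u * S) = ∫ z, f u * σ z := by rw [integral_const_mul]
          rw [this]
          apply tendsto_integral_filter_of_dominated_convergence
            (F := fun lam z => g (u + (lam ^ ((1:ℝ)/d))⁻¹ • z) * σ z) (fun z => B * (M * Real.exp (-c * ‖z‖)))
          · filter_upwards with lam
            exact (Measurable.aestronglyMeasurable (by fun_prop))
          · filter_upwards with lam
            filter_upwards with z
            rw [Real.norm_eq_abs, abs_mul]
            have h1' := hgB (u + (lam ^ ((1:ℝ)/d))⁻¹ • z)
            have h2' := hσdecay z
            nlinarith [abs_nonneg (g (u + (lam ^ ((1:ℝ)/d))⁻¹ • z)), abs_nonneg (σ z)]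
          · exact Integrable.const_mul (Integrable.const_mul hexp M) B
          · filter_upwards with z
            have hs : Filter.Tendsto (fun lam : ℝ => (lam ^ ((1:ℝ)/d))⁻¹)
                Filter.atTop (nhds 0) := by
              have h1d : (0:ℝ) < 1/d := by positivity
              exact (tendsto_rpow_atTop h1d).inv_tendsto_atTop
            have hw : Filter.Tendsto (fun lam : ℝ => u + (lam ^ ((1:ℝ)/d))⁻¹ • z)
                Filter.atTop (nhds u) := by
              have := Filter.Tendsto.const_add u ((hs.smul_const z))
              simpa using this
            have hev : ∀ᶠ lam : ℝ in Filter.atTop,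
                u + (lam ^ ((1:ℝ)/d))⁻¹ • z ∈ interior (cube d 1) :=
              hw.eventually_mem (isOpen_interior.mem_nhds hint)
            have hfw : Filter.Tendsto (fun lam : ℝ => f (u + (lam ^ ((1:ℝ)/d))⁻¹ • z))
                Filter.atTop (nhds (f u)) := hcontu.tendsto.comp hw
            have heq : (fun lam : ℝ => f (u + (lam ^ ((1:ℝ)/d))⁻¹ • z) * σ z) =ᶠ[Filter.atTop]
                fun lam : ℝ => g (u + (lam ^ ((1:ℝ)/d))⁻¹ • z) * σ z := by
              filter_upwards [hev] with lam hlam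
              rw [hg, Set.indicator_of_mem (interior_subset hlam)]
            exact (hfw.mul_const (σ z)).congr' heq
        exact (hItend.const_mul (g u))
      · have : ∀ lam : ℝ, g u * I lam u = 0 := by
          intro lam; rw [hg, Set.indicator_of_notMem hu, zero_mul]
        simp only [this]
        have : g u * (f u * S) = 0 := by
          rw [hg, Set.indicator_of_notMem hu, zero_mul]
        rw [this]
        exact tendsto_const_nhds
  rw [hS] at H
  refine H.congr' ?_
  filter_upwards [Filter.eventually_gt_atTop (0:ℝ)] with lam hlam
  exact (key_eq hd σ f hlam).symm
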